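/- Let d >= 1, let m <= n be natural numbers, and let a : Fin m -> {0,1}^d and b : Fin n -> {0,1}^d be families of 0/1 vectors. Suppose Phi1, Phi2 : {0,1}^d -> {0,1}^(12d+1) and v in {0,1}^(12d+1) satisfy ||Phi1(x) - Phi2(y)||^2 = 2*(x . y) + 4d + 2 and ||Phi1(x) - v||^2 = 4d + 4 for all x, y in {0,1}^d. Define B'' : Fin (n+m) -> {0,1}^(12d+1) by B''_j = Phi2(b_j) for j < n and B''_j = v for n <= j < n+m. Define m* as the maximum, over all injections pi : Fin m -> Fin (n+m), of the number of indices i with pi(i) < n and a_i . b_{pi(i)} = 0. Then the minimum over all injections pi : Fin m -> Fin (n+m) of sum_{i < m} ||Phi1(a_i) - B''_{pi(i)}||_2 equals m* * sqrt(4d+2) + (m - m*) * sqrt(4d+4). -/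

import Mathlib

lemma key_aux {m : ℕ} {ι : Type*} [Fintype ι] [Nonempty ι]
    (F : ι → ℝ) (N : ι → ℕ) (K L : ℝ) (hKL : K ≤ L)
    (hNle : ∀ π, N π ≤ m)
    (hlow : ∀ π, (N π : ℝ) * K + ((m : ℝ) - (N π : ℝ)) * L ≤ F π)
    (hach : ∃ π, F π = ((⨆ τ, N τ : ℕ) : ℝ) * K + ((m : ℝ) - ((⨆ τ, N τ : ℕ) : ℝ)) * L) :
    (⨅ π, F π) = ((⨆ π, N π : ℕ) : ℝ) * K + ((m : ℝ) - ((⨆ π, N π : ℕ) : ℝ)) * L := by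
  obtain ⟨π₁, hπ₁⟩ := hach
  have hbdd : BddBelow (Set.range F) := (Set.finite_range F).bddBelow
  have hub : ∀ π, N π ≤ ⨆ τ, N τ := fun π => le_ciSup ((Set.finite_range N).bddAbove) π
  have hMle : (⨆ τ, N τ) ≤ m := by
    have hmem : (⨆ τ, N τ) ∈ Set.range N := by
      rw [show (⨆ τ, N τ) = sSup (Set.range N) from rfl]
      exact Nat.sSup_mem (Set.range_nonempty N) ((Set.finite_range N).bddAbove)
    obtain ⟨π, hπ⟩ := hmem
    exact hπ ▸ hNle π
  apply le_antisymm
  · exact hπ₁ ▸ ciInf_le hbdd π₁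
  · apply le_ciInf
    intro π
    refine le_trans ?_ (hlow π)
    have h1 : (N π : ℝ) ≤ ((⨆ τ, N τ : ℕ) : ℝ) := by exact_mod_cast hub π
    have h2 : ((⨆ τ, N τ : ℕ) : ℝ) ≤ m := by exact_mod_cast hMle
    nlinarith [mul_nonneg (sub_nonneg.2 h1) (sub_nonneg.2 hKL)]

/-- Reduction from Maximum Orthogonal Matching to asymmetric EMD: given gadget maps
`Φ₁, Φ₂ : {0,1}^d → {0,1}^{12d+1}` and an auxiliary vector `v` with
`‖Φ₁(x) - Φ₂(y)‖² = 2(x⬝y) + 4d + 2` and `‖Φ₁(x) - v‖² = 4d + 4`, form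
`B'' : Fin (n+m)` consisting of `Φ₂(b_j)` for `j < n` followed by `m` copies of `v`.
Then the asymmetric EMD (minimum over injections `π : Fin m ↪ Fin (n+m)` of
`∑ i, ‖Φ₁(a_i) - B''_{π i}‖₂`) equals `m* √(4d+2) + (m - m*) √(4d+4)`, where `m*` is the
maximum size of an orthogonal matching between the families `a` and `b`. -/
theorem asymmetric_emd_of_mom_instance (d m n : ℕ) (hd : 1 ≤ d) (hmn : m ≤ n)
    (a : Fin m → Fin d → ℝ) (b : Fin n → Fin d → ℝ)
    (ha : ∀ i t, a i t = 0 ∨ a i t = 1)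
    (hb : ∀ j t, b j t = 0 ∨ b j t = 1)
    (Φ₁ Φ₂ : (Fin d → ℝ) → (Fin (12 * d + 1) → ℝ)) (v : Fin (12 * d + 1) → ℝ)
    (hΦ : ∀ x y : Fin d → ℝ,
        (∀ i, x i = 0 ∨ x i = 1) → (∀ i, y i = 0 ∨ y i = 1) →
          ∑ j, (Φ₁ x j - Φ₂ y j) ^ 2 = 2 * (∑ i, x i * y i) + 4 * d + 2)
    (hv : ∀ x : Fin d → ℝ, (∀ i, x i = 0 ∨ x i = 1) →
        ∑ j, (Φ₁ x j - v j) ^ 2 = 4 * d + 4) :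
    (⨅ π : Fin m ↪ Fin (n + m),
        ∑ i, Real.sqrt (∑ j,
          (Φ₁ (a i) j -
            (if h : ((π i : Fin (n + m)) : ℕ) < n then Φ₂ (b ⟨π i, h⟩) j else v j)) ^ 2)) =
      ((⨆ π : Fin m ↪ Fin (n + m),
          Nat.card {i : Fin m //
            ∃ h : ((π i : Fin (n + m)) : ℕ) < n, ∑ t, a i t * b ⟨π i, h⟩ t = 0} : ℕ) : ℝ)
          * Real.sqrt (4 * d + 2) +
        ((m : ℝ) - ((⨆ π : Fin m ↪ Fin (n + m),
          Nat.card {i : Fin m //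
            ∃ h : ((π i : Fin (n + m)) : ℕ) < n, ∑ t, a i t * b ⟨π i, h⟩ t = 0} : ℕ) : ℝ))
          * Real.sqrt (4 * d + 4) := by
  classical
  have hne : Nonempty (Fin m ↪ Fin (n + m)) :=
    ⟨⟨fun i => ⟨(i : ℕ), by omega⟩, fun x y h => by
      apply Fin.ext; simpa [Fin.ext_iff] using h⟩⟩
  -- dot product facts
  have dot01 : ∀ (i : Fin m) (j : Fin n) (t : Fin d), a i t * b j t = 0 ∨ a i t * b j t = 1 := by
    intro i j t; rcases ha i t with h1 | h1 <;> rcases hb j t with h2 | h2 <;> simp [h1, h2]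
  have dotpos : ∀ (i : Fin m) (j : Fin n), (∑ t, a i t * b j t) ≠ 0 → 1 ≤ ∑ t, a i t * b j t := by
    intro i j hne'
    by_cases hz : ∀ t ∈ Finset.univ, a i t * b j t = 0
    · exact absurd (Finset.sum_eq_zero hz) hne'
    · push_neg at hz
      obtain ⟨t, -, ht⟩ := hz
      have h1 : a i t * b j t = 1 := (dot01 i j t).resolve_left ht
      calc (1 : ℝ) = a i t * b j t := h1.symm
        _ ≤ ∑ t, a i t * b j t := Finset.single_le_sum (f := fun t => a i t * b j t)
            (fun s _ => by
              show (0:ℝ) ≤ a i s * b j s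
              rcases dot01 i j s with h | h <;> rw [h] <;> norm_num)
            (Finset.mem_univ t)
  have hKL : Real.sqrt (4 * (d : ℝ) + 2) ≤ Real.sqrt (4 * (d : ℝ) + 4) :=
    Real.sqrt_le_sqrt (by linarith)
  -- per-element cost facts
  have costK : ∀ (π : Fin m ↪ Fin (n + m)) (i : Fin m)
      (h : ((π i : Fin (n + m)) : ℕ) < n), (∑ t, a i t * b ⟨π i, h⟩ t = 0) →
      Real.sqrt (∑ j, (Φ₁ (a i) j -
        (if h : ((π i : Fin (n + m)) : ℕ) < n then Φ₂ (b ⟨π i, h⟩) j else v j)) ^ 2)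
        = Real.sqrt (4 * (d : ℝ) + 2) := by
    intro π i h hdot
    simp only [dif_pos h]
    rw [hΦ (a i) (b ⟨π i, h⟩) (ha i) (fun t => hb _ t), hdot]
    norm_num
  have costL : ∀ (π : Fin m ↪ Fin (n + m)) (i : Fin m),
      ¬(∃ h : ((π i : Fin (n + m)) : ℕ) < n, ∑ t, a i t * b ⟨π i, h⟩ t = 0) →
      Real.sqrt (4 * (d : ℝ) + 4) ≤
      Real.sqrt (∑ j, (Φ₁ (a i) j -
        (if h : ((π i : Fin (n + m)) : ℕ) < n then Φ₂ (b ⟨π i, h⟩) j else v j)) ^ 2) := by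
    intro π i hi
    by_cases h : ((π i : Fin (n + m)) : ℕ) < n
    · have hd0 : (∑ t, a i t * b ⟨π i, h⟩ t) ≠ 0 := fun hc => hi ⟨h, hc⟩
      have h1 := dotpos i ⟨π i, h⟩ hd0
      simp only [dif_pos h]
      rw [hΦ (a i) (b ⟨π i, h⟩) (ha i) (fun t => hb _ t)]
      exact Real.sqrt_le_sqrt (by linarith)
    · simp only [dif_neg h]
      rw [hv (a i) (ha i)]
  have costLeq : ∀ (π : Fin m ↪ Fin (n + m)) (i : Fin m),
      ¬(((π i : Fin (n + m)) : ℕ) < n) →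
      Real.sqrt (∑ j, (Φ₁ (a i) j -
        (if h : ((π i : Fin (n + m)) : ℕ) < n then Φ₂ (b ⟨π i, h⟩) j else v j)) ^ 2)
        = Real.sqrt (4 * (d : ℝ) + 4) := by
    intro π i h
    simp only [dif_neg h]
    rw [hv (a i) (ha i)]
  -- cardinality rewriting
  have hcard : ∀ π : Fin m ↪ Fin (n + m),
      Nat.card {i : Fin m //
        ∃ h : ((π i : Fin (n + m)) : ℕ) < n, ∑ t, a i t * b ⟨π i, h⟩ t = 0}
      = (Finset.univ.filter (fun i : Fin m =>
          ∃ h : ((π i : Fin (n + m)) : ℕ) < n, ∑ t, a i t * b ⟨π i, h⟩ t = 0)).card := by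
    intro π
    rw [Nat.card_eq_fintype_card, Fintype.card_subtype]
  refine key_aux _ _ _ _ hKL ?_ ?_ ?_
  · -- N π ≤ m
    intro π
    rw [hcard π]
    exact le_trans (Finset.card_filter_le _ _) (by simp)
  · -- lower bound
    intro π
    set p : Fin m → Prop := fun i =>
      ∃ h : ((π i : Fin (n + m)) : ℕ) < n, ∑ t, a i t * b ⟨π i, h⟩ t = 0 with hp
    set T : Finset (Fin m) := Finset.univ.filter p with hT
    rw [hcard π]
    rw [← Finset.sum_filter_add_sum_filter_not Finset.univ p]
    have h1 : ∑ i ∈ T, Real.sqrt (∑ j, (Φ₁ (a i) j -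
        (if h : ((π i : Fin (n + m)) : ℕ) < n then Φ₂ (b ⟨π i, h⟩) j else v j)) ^ 2)
        = (T.card : ℝ) * Real.sqrt (4 * (d : ℝ) + 2) := by
      rw [Finset.sum_congr rfl (fun i hi => ?_), Finset.sum_const, nsmul_eq_mul]
      obtain ⟨h, hdot⟩ := (Finset.mem_filter.mp hi).2
      exact costK π i h hdot
    have h2 : ((Finset.univ.filter (fun i => ¬ p i)).card : ℝ) * Real.sqrt (4 * (d : ℝ) + 4)
        ≤ ∑ i ∈ Finset.univ.filter (fun i => ¬ p i), Real.sqrt (∑ j, (Φ₁ (a i) j -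
        (if h : ((π i : Fin (n + m)) : ℕ) < n then Φ₂ (b ⟨π i, h⟩) j else v j)) ^ 2) := by
      rw [← nsmul_eq_mul]
      exact Finset.card_nsmul_le_sum _ _ _ (fun i hi => costL π i (Finset.mem_filter.mp hi).2)
    have hcc : T.card + (Finset.univ.filter (fun i => ¬ p i)).card = m := by
      rw [hT, Finset.card_filter_add_card_filter_not]
      simp
    have hccR : ((m : ℝ) - (T.card : ℝ))
        = ((Finset.univ.filter (fun i => ¬ p i)).card : ℝ) := by
      have := hcc
      push_cast [← this]
      ring
    calc (T.card : ℝ) * Real.sqrt (4 * (d : ℝ) + 2)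
          + ((m : ℝ) - (T.card : ℝ)) * Real.sqrt (4 * (d : ℝ) + 4)
        = (T.card : ℝ) * Real.sqrt (4 * (d : ℝ) + 2)
          + ((Finset.univ.filter (fun i => ¬ p i)).card : ℝ) * Real.sqrt (4 * (d : ℝ) + 4) := by
          rw [hccR]
      _ ≤ _ := by rw [← h1]; exact add_le_add (le_refl _) h2
  · -- achievability
    set N : (Fin m ↪ Fin (n + m)) → ℕ := fun π =>
      Nat.card {i : Fin m //
        ∃ h : ((π i : Fin (n + m)) : ℕ) < n, ∑ t, a i t * b ⟨π i, h⟩ t = 0} with hNdef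
    have hmem : (⨆ τ, N τ) ∈ Set.range N := by
      rw [show (⨆ τ, N τ) = sSup (Set.range N) from rfl]
      exact Nat.sSup_mem (Set.range_nonempty N) ((Set.finite_range N).bddAbove)
    obtain ⟨π₀, hπ₀⟩ := hmem
    set p : Fin m → Prop := fun i =>
      ∃ h : ((π₀ i : Fin (n + m)) : ℕ) < n, ∑ t, a i t * b ⟨π₀ i, h⟩ t = 0 with hp
    set T : Finset (Fin m) := Finset.univ.filter p with hT
    have hTcard : T.card = ⨆ τ, N τ := by
      rw [← hπ₀, hNdef]
      exact (hcard π₀).symm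
    -- build the witness embedding
    have hginj : Function.Injective (fun i : Fin m =>
        if i ∈ T then π₀ i else (⟨n + (i : ℕ), by omega⟩ : Fin (n + m))) := by
      intro x y hxy
      by_cases hx : x ∈ T <;> by_cases hy : y ∈ T <;>
        simp only [if_pos, if_neg, hx, hy, if_true, if_false] at hxy
      · exact π₀.injective hxy
      · obtain ⟨h, -⟩ := (Finset.mem_filter.mp hx).2
        have := congrArg (fun z : Fin (n + m) => (z : ℕ)) hxy
        simp at this; omega
      · obtain ⟨h, -⟩ := (Finset.mem_filter.mp hy).2
        have := congrArg (fun z : Fin (n + m) => (z : ℕ)) hxy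
        simp at this; omega
      · have := congrArg (fun z : Fin (n + m) => (z : ℕ)) hxy
        simp at this
        exact Fin.ext (by omega)
    refine ⟨⟨_, hginj⟩, ?_⟩
    have hval : ∀ i : Fin m,
        ((⟨_, hginj⟩ : Fin m ↪ Fin (n + m)) i) =
          if i ∈ T then π₀ i else (⟨n + (i : ℕ), by omega⟩ : Fin (n + m)) := fun i => rfl
    rw [← Finset.sum_filter_add_sum_filter_not Finset.univ (fun i => i ∈ T)]
    have h1 : ∀ i ∈ Finset.univ.filter (fun i : Fin m => i ∈ T),
        Real.sqrt (∑ j, (Φ₁ (a i) j -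
          (if h : (((⟨_, hginj⟩ : Fin m ↪ Fin (n + m)) i : Fin (n + m)) : ℕ) < n
            then Φ₂ (b ⟨(⟨_, hginj⟩ : Fin m ↪ Fin (n + m)) i, h⟩) j else v j)) ^ 2)
        = Real.sqrt (4 * (d : ℝ) + 2) := by
      intro i hi
      have hiT : i ∈ T := (Finset.mem_filter.mp hi).2
      obtain ⟨h, hdot⟩ := (Finset.mem_filter.mp hiT).2
      have he : ((⟨_, hginj⟩ : Fin m ↪ Fin (n + m)) i) = π₀ i := by
        rw [hval i, if_pos hiT]
      rw [show (fun j => (Φ₁ (a i) j -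
          (if h : (((⟨_, hginj⟩ : Fin m ↪ Fin (n + m)) i : Fin (n + m)) : ℕ) < n
            then Φ₂ (b ⟨(⟨_, hginj⟩ : Fin m ↪ Fin (n + m)) i, h⟩) j else v j)) ^ 2)
        = (fun j => (Φ₁ (a i) j -
          (if h : ((π₀ i : Fin (n + m)) : ℕ) < n
            then Φ₂ (b ⟨π₀ i, h⟩) j else v j)) ^ 2) from by rw [he]]
      exact costK π₀ i h hdot
    have h2 : ∀ i ∈ Finset.univ.filter (fun i : Fin m => ¬ (i ∈ T)),
        Real.sqrt (∑ j, (Φ₁ (a i) j -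
          (if h : (((⟨_, hginj⟩ : Fin m ↪ Fin (n + m)) i : Fin (n + m)) : ℕ) < n
            then Φ₂ (b ⟨(⟨_, hginj⟩ : Fin m ↪ Fin (n + m)) i, h⟩) j else v j)) ^ 2)
        = Real.sqrt (4 * (d : ℝ) + 4) := by
      intro i hi
      have hiT : ¬ (i ∈ T) := (Finset.mem_filter.mp hi).2
      have hge : ¬ ((((⟨_, hginj⟩ : Fin m ↪ Fin (n + m)) i : Fin (n + m)) : ℕ) < n) := by
        rw [hval i, if_neg hiT]; simp
      exact costLeq _ i hge
    rw [Finset.sum_congr rfl h1, Finset.sum_congr rfl h2,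
      Finset.sum_const, Finset.sum_const, nsmul_eq_mul, nsmul_eq_mul]
    have hfT : Finset.univ.filter (fun i : Fin m => i ∈ T) = T := by
      simp [Finset.filter_mem_eq_inter]
    have hcc : T.card + (Finset.univ.filter (fun i : Fin m => ¬ (i ∈ T))).card = m := by
      have h := Finset.card_filter_add_card_filter_not
        (s := (Finset.univ : Finset (Fin m))) (p := fun i => i ∈ T)
      simpa [hfT] using h
    have hc2 : (((Finset.univ.filter (fun i : Fin m => ¬ (i ∈ T))).card : ℝ))
        = (m : ℝ) - ((⨆ τ, N τ : ℕ) : ℝ) := by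
      rw [hTcard] at hcc
      push_cast [← hcc]
      ring
    rw [hfT, hTcard, hc2]
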